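/- Let n be a natural number with n ≥ 1 and let p₁ ≤ p₂ ≤ … ≤ pₙ and q₁ ≤ q₂ ≤ … ≤ qₙ be positive real numbers such that ∑_{j=1}^n p_j = ∑_{j=1}^n q_j and, for every k with 2 ≤ k ≤ n, ∑_{j=k}^n p_j ≤ ∑_{j=k}^n q_j. Then for every real x with 1 < x, one has (∏_{j=1}^n q_j)·∏_{j=1}^n (x^{p_j} - 1) ≤ (∏_{j=1}^n p_j)·∏_{j=1}^n (x^{q_j} - 1). -/

import Mathlib

open Real Set

private lemma one_lt_rpow' {x t : ℝ} (hx : 1 < x) (ht : 0 < t) : 1 < x ^ t := by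
  rw [show (1:ℝ) = x ^ (0:ℝ) by simp]
  exact Real.rpow_lt_rpow_left_iff hx |>.mpr ht

private lemma hasDerivAt_f {x : ℝ} (hx : 1 < x) {t : ℝ} (ht : 0 < t) :
    HasDerivAt (fun t : ℝ => Real.log (x ^ t - 1) - Real.log t)
      (x ^ t * Real.log x / (x ^ t - 1) - t⁻¹) t := by
  have hx0 : (0:ℝ) < x := lt_trans one_pos hx
  have h1 : HasDerivAt (fun u : ℝ => x ^ u - 1) (x ^ t * Real.log x) t :=
    ((Real.hasStrictDerivAt_const_rpow hx0 t).hasDerivAt).sub_const 1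
  have h2 : HasDerivAt (fun u : ℝ => Real.log (x ^ u - 1))
      (x ^ t * Real.log x / (x ^ t - 1)) t :=
    h1.log (by have := one_lt_rpow' hx ht; linarith)
  exact h2.sub (Real.hasDerivAt_log ht.ne')

private lemma hasDerivAt_phi {x : ℝ} (hx : 1 < x) {t : ℝ} (ht : 0 < t) :
    HasDerivAt (fun t : ℝ => x ^ t * Real.log x / (x ^ t - 1) - t⁻¹)
      ((t ^ 2)⁻¹ - (Real.log x) ^ 2 * x ^ t / (x ^ t - 1) ^ 2) t := by
  have hx0 : (0:ℝ) < x := lt_trans one_pos hx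
  have hne : x ^ t - 1 ≠ 0 := by have := one_lt_rpow' hx ht; linarith
  have hrp : HasDerivAt (fun u : ℝ => x ^ u) (x ^ t * Real.log x) t :=
    (Real.hasStrictDerivAt_const_rpow hx0 t).hasDerivAt
  have hu : HasDerivAt (fun u : ℝ => x ^ u * Real.log x)
      (x ^ t * Real.log x * Real.log x) t := hrp.mul_const _
  have hv : HasDerivAt (fun u : ℝ => x ^ u - 1) (x ^ t * Real.log x) t := hrp.sub_const 1
  have hdiv := hu.div hv hne
  have hinv := hasDerivAt_inv ht.ne'
  convert hdiv.sub hinv using 1 <;> try rfl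
  have h2 : x ^ t - 1 ≠ 0 := hne
  field_simp
  ring

-- key inequality: u^2 * e^u ≤ (e^u - 1)^2 for u ≥ 0
private lemma key_ineq {u : ℝ} (hu : 0 ≤ u) : u ^ 2 * Real.exp u ≤ (Real.exp u - 1) ^ 2 := by
  have h1 : u ≤ 2 * Real.sinh (u / 2) := by
    have := Real.self_le_sinh_iff.mpr (by linarith : (0:ℝ) ≤ u / 2)
    linarith
  have h2 : u * Real.exp (u / 2) ≤ Real.exp u - 1 := by
    have hs : Real.sinh (u / 2) = (Real.exp (u / 2) - Real.exp (-(u / 2))) / 2 := Real.sinh_eq _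
    have hmul : u * Real.exp (u / 2) ≤ 2 * Real.sinh (u / 2) * Real.exp (u / 2) :=
      mul_le_mul_of_nonneg_right h1 (Real.exp_pos _).le
    have hexp : Real.exp (u / 2) * Real.exp (u / 2) = Real.exp u := by
      rw [← Real.exp_add]; ring_nf
    have hexp2 : Real.exp (-(u / 2)) * Real.exp (u / 2) = 1 := by
      rw [← Real.exp_add]; simp
    calc u * Real.exp (u / 2) ≤ 2 * Real.sinh (u / 2) * Real.exp (u / 2) := hmul
      _ = Real.exp u - 1 := by rw [hs]; linear_combination hexp - hexp2
  have h0 : 0 ≤ u * Real.exp (u / 2) := by positivity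
  have := mul_self_le_mul_self h0 h2
  calc u ^ 2 * Real.exp u = (u * Real.exp (u / 2)) * (u * Real.exp (u / 2)) := by
        rw [show Real.exp u = Real.exp (u/2) * Real.exp (u/2) by rw [← Real.exp_add]; ring_nf]
        ring
    _ ≤ (Real.exp u - 1) * (Real.exp u - 1) := this
    _ = (Real.exp u - 1) ^ 2 := by ring

private lemma psi_nonneg {x : ℝ} (hx : 1 < x) {t : ℝ} (ht : 0 < t) :
    0 ≤ (t ^ 2)⁻¹ - (Real.log x) ^ 2 * x ^ t / (x ^ t - 1) ^ 2 := by
  have hx0 : (0:ℝ) < x := lt_trans one_pos hx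
  have hlx : 0 < Real.log x := Real.log_pos hx
  have hxt : 1 < x ^ t := by
    rw [show (1:ℝ) = x ^ (0:ℝ) by simp]; exact Real.rpow_lt_rpow_left_iff hx |>.mpr ht
  have hne : (0:ℝ) < x ^ t - 1 := by linarith
  have hxt_eq : x ^ t = Real.exp (t * Real.log x) := by
    rw [Real.rpow_def_of_pos hx0]; ring_nf
  set u := t * Real.log x with hu
  have hu0 : 0 < u := by positivity
  have hk := key_ineq hu0.le
  rw [hxt_eq, sub_nonneg]
  have hE1 : (0:ℝ) < Real.exp u - 1 := by rw [← hxt_eq]; linarith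
  rw [div_le_iff₀ (by positivity : (0:ℝ) < (Real.exp u - 1) ^ 2), inv_mul_eq_div,
    le_div_iff₀ (by positivity : (0:ℝ) < t ^ 2)]
  calc Real.log x ^ 2 * Real.exp u * t ^ 2 = u ^ 2 * Real.exp u := by rw [hu]; ring
    _ ≤ (Real.exp u - 1) ^ 2 := hk

private lemma phi_mono {x : ℝ} (hx : 1 < x) :
    MonotoneOn (fun t : ℝ => x ^ t * Real.log x / (x ^ t - 1) - t⁻¹) (Set.Ioi 0) := by
  have hx0 : (0:ℝ) < x := lt_trans one_pos hx
  have hder : ∀ t ∈ Set.Ioi (0:ℝ), HasDerivAt (fun t : ℝ => x ^ t * Real.log x / (x ^ t - 1) - t⁻¹)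
      ((t ^ 2)⁻¹ - (Real.log x) ^ 2 * x ^ t / (x ^ t - 1) ^ 2) t := by
    intro t ht
    have hne : x ^ t - 1 ≠ 0 := by
      have : 1 < x ^ t := by
        rw [show (1:ℝ) = x ^ (0:ℝ) by simp]; exact Real.rpow_lt_rpow_left_iff hx |>.mpr ht
      linarith
    have hrp : HasDerivAt (fun u : ℝ => x ^ u) (x ^ t * Real.log x) t :=
      (Real.hasStrictDerivAt_const_rpow hx0 t).hasDerivAt
    have hdiv := (hrp.mul_const (Real.log x)).div (hrp.sub_const 1) hne
    have hinv := hasDerivAt_inv (ne_of_gt (Set.mem_Ioi.mp ht))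
    convert hdiv.sub hinv using 1 <;> try rfl
    field_simp
    ring
  apply monotoneOn_of_deriv_nonneg (convex_Ioi 0)
  · exact fun t ht => (hder t ht).continuousAt.continuousWithinAt
  · intro t ht
    rw [interior_Ioi] at ht
    exact (hder t ht).differentiableAt.differentiableWithinAt
  · intro t ht
    rw [interior_Ioi] at ht
    rw [(hder t ht).deriv]
    exact psi_nonneg hx ht

private lemma f_convex {x : ℝ} (hx : 1 < x) :
    ConvexOn ℝ (Set.Ioi 0) (fun t : ℝ => Real.log (x ^ t - 1) - Real.log t) := by
  apply MonotoneOn.convexOn_of_deriv (convex_Ioi 0)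
  · exact fun t ht => (hasDerivAt_f hx (Set.mem_Ioi.mp ht)).continuousAt.continuousWithinAt
  · intro t ht
    rw [interior_Ioi] at ht
    exact (hasDerivAt_f hx (Set.mem_Ioi.mp ht)).differentiableAt.differentiableWithinAt
  · rw [interior_Ioi]
    intro a ha b hb hab
    rw [(hasDerivAt_f hx (Set.mem_Ioi.mp ha)).deriv, (hasDerivAt_f hx (Set.mem_Ioi.mp hb)).deriv]
    exact phi_mono hx ha hb hab


private noncomputable def Fl (x t : ℝ) : ℝ := Real.log (x ^ t - 1) - Real.log t

private noncomputable def Gslope (x a b : ℝ) : ℝ :=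
  if a = b then x ^ a * Real.log x / (x ^ a - 1) - a⁻¹
  else (Fl x b - Fl x a) / (b - a)

private lemma hasDerivAt_Fl {x : ℝ} (hx : 1 < x) {t : ℝ} (ht : 0 < t) :
    HasDerivAt (Fl x) (x ^ t * Real.log x / (x ^ t - 1) - t⁻¹) t := hasDerivAt_f hx ht

private lemma Fl_convex {x : ℝ} (hx : 1 < x) : ConvexOn ℝ (Set.Ioi 0) (Fl x) := f_convex hx

private lemma gslope_eq (x : ℝ) (a b : ℝ) :
    Fl x b - Fl x a = Gslope x a b * (b - a) := by
  unfold Gslope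
  by_cases h : a = b
  · subst h; simp
  · rw [if_neg h, div_mul_cancel₀]
    exact sub_ne_zero.mpr (Ne.symm h)

private lemma gsymm (x a b : ℝ) : Gslope x a b = Gslope x b a := by
  unfold Gslope
  by_cases h : a = b
  · subst h; simp
  · rw [if_neg h, if_neg (Ne.symm h), ← neg_div_neg_eq]
    ring_nf

private lemma gmono2 {x : ℝ} (hx : 1 < x) {a b b' : ℝ} (ha : 0 < a) (hb : 0 < b)
    (hb' : 0 < b') (hbb : b ≤ b') : Gslope x a b ≤ Gslope x a b' := by
  rcases eq_or_lt_of_le hbb with rfl | hlt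
  · exact le_refl _
  · have ha' : a ∈ Set.Ioi (0:ℝ) := ha
    have hbm : b ∈ Set.Ioi (0:ℝ) := hb
    have hbm' : b' ∈ Set.Ioi (0:ℝ) := hb'
    unfold Gslope
    by_cases hab : a = b
    · subst hab
      rw [if_pos rfl, if_neg (ne_of_lt hlt)]
      have := (Fl_convex hx).le_slope_of_hasDerivAt hbm hbm' hlt (hasDerivAt_Fl hx ha)
      rwa [slope_def_field] at this
    · by_cases hab' : a = b'
      · subst hab'
        rw [if_neg hab, if_pos rfl]
        have := (Fl_convex hx).slope_le_of_hasDerivAt hbm ha' hlt (hasDerivAt_Fl hx ha)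
        rw [slope_def_field] at this
        calc (Fl x b - Fl x a) / (b - a) = (Fl x a - Fl x b) / (a - b) := by
              rw [← neg_div_neg_eq]; ring_nf
          _ ≤ _ := this
      · rw [if_neg hab, if_neg hab']
        exact (Fl_convex hx).secant_mono ha' hbm hbm' (Ne.symm hab) (Ne.symm hab') hbb


private lemma abel_nonneg (n : ℕ) (σ d : ℕ → ℝ)
    (hσ : ∀ i j, i ≤ j → j < n → σ i ≤ σ j)
    (htail : ∀ k, 1 ≤ k → 0 ≤ ∑ j ∈ Finset.Ico k n, d j) :
    σ 0 * ∑ j ∈ Finset.range n, d j ≤ ∑ j ∈ Finset.range n, σ j * d j := by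
  induction n generalizing σ d with
  | zero => simp
  | succ n ih =>
    have hshift : ∀ k, ∑ j ∈ Finset.Ico k n, d (j + 1) = ∑ j ∈ Finset.Ico (k + 1) (n + 1), d j :=
      fun k => Finset.sum_Ico_add' d k n 1
    have h1 := ih (fun j => σ (j + 1)) (fun j => d (j + 1))
      (fun i j hij hj => hσ (i + 1) (j + 1) (by omega) (by omega))
      (fun k hk => by rw [hshift]; exact htail (k + 1) (by omega))
    have hS : 0 ≤ ∑ j ∈ Finset.range n, d (j + 1) := by
      have h := htail 1 le_rfl
      rw [← hshift 0] at h
      rwa [Finset.range_eq_Ico]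
    rw [Finset.sum_range_succ' (fun j => σ j * d j) n, Finset.sum_range_succ' d n]
    rcases Nat.eq_zero_or_pos n with rfl | hn
    · simp
    · have hσ01 : σ 0 ≤ σ 1 := hσ 0 1 (by omega) (by omega)
      have h2 : σ 1 * ∑ j ∈ Finset.range n, d (j + 1) ≤ ∑ j ∈ Finset.range n, σ (j + 1) * d (j + 1) := h1
      nlinarith [mul_le_mul_of_nonneg_right hσ01 hS]


private lemma gmono {x : ℝ} (hx : 1 < x) {a a' b b' : ℝ} (ha : 0 < a) (ha' : 0 < a')
    (hb : 0 < b) (hb' : 0 < b') (haa : a ≤ a') (hbb : b ≤ b') :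
    Gslope x a b ≤ Gslope x a' b' := by
  refine (gmono2 hx ha hb hb' hbb).trans ?_
  rw [gsymm x a b', gsymm x a' b']
  exact gmono2 hx hb' ha ha' haa

theorem stmt_3 (n : ℕ) (hn : 1 ≤ n) (p q : Fin n → ℝ)
    (hpmono : Monotone p) (hqmono : Monotone q)
    (hppos : ∀ j, 0 < p j) (hqpos : ∀ j, 0 < q j)
    (hsum : ∑ j, p j = ∑ j, q j)
    (htail : ∀ k : Fin n, 1 ≤ (k : ℕ) →
      ∑ j ∈ Finset.Ici k, p j ≤ ∑ j ∈ Finset.Ici k, q j)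
    (x : ℝ) (hx : 1 < x) :
    (∏ j, q j) * ∏ j, (x ^ p j - 1) ≤ (∏ j, p j) * ∏ j, (x ^ q j - 1) := by
  classical
  -- bridging lemmas between Fin n sums and ℕ sums
  have hmap : ∀ (k : ℕ) (hk : k < n),
      Finset.map Fin.valEmbedding (Finset.Ici (⟨k, hk⟩ : Fin n)) = Finset.Ico k n := by
    intro k hk
    ext m
    simp only [Finset.mem_map, Finset.mem_Ici, Finset.mem_Ico, Fin.valEmbedding_apply]
    constructor
    · rintro ⟨a, ha, rfl⟩
      exact ⟨ha, a.isLt⟩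
    · rintro ⟨h1, h2⟩
      exact ⟨⟨m, h2⟩, h1, rfl⟩
  have hIci : ∀ (F : Fin n → ℝ) (k : ℕ) (hk : k < n),
      ∑ j ∈ Finset.Ico k n, (if h : j < n then F ⟨j, h⟩ else 0) =
        ∑ j ∈ Finset.Ici (⟨k, hk⟩ : Fin n), F j := by
    intro F k hk
    rw [← hmap k hk, Finset.sum_map]
    refine Finset.sum_congr rfl fun i _ => ?_
    simp [i.isLt]
  have hrange : ∀ (F : Fin n → ℝ),
      ∑ j ∈ Finset.range n, (if h : j < n then F ⟨j, h⟩ else 0) = ∑ j, F j := by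
    intro F
    rw [← Fin.sum_univ_eq_sum_range (fun j => if h : j < n then F ⟨j, h⟩ else 0) n]
    refine Finset.sum_congr rfl fun i _ => ?_
    simp [i.isLt]
  set d : ℕ → ℝ := fun i => if h : i < n then q ⟨i, h⟩ - p ⟨i, h⟩ else 0 with hd
  set σ : ℕ → ℝ := fun i => if h : i < n then Gslope x (p ⟨i, h⟩) (q ⟨i, h⟩) else 0 with hσdef
  have habel := abel_nonneg n σ d
    (by
      intro i j hij hj
      have hi : i < n := lt_of_le_of_lt hij hj
      simp only [hσdef, dif_pos hi, dif_pos hj]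
      have hle : (⟨i, hi⟩ : Fin n) ≤ ⟨j, hj⟩ := hij
      exact gmono hx (hppos _) (hppos _) (hqpos _) (hqpos _) (hpmono hle) (hqmono hle))
    (by
      intro k hk
      rcases lt_or_ge k n with hkn | hkn
      · rw [hIci (fun j => q j - p j) k hkn, Finset.sum_sub_distrib, sub_nonneg]
        exact htail ⟨k, hkn⟩ hk
      · rw [Finset.Ico_eq_empty (by omega)]
        simp)
  have hdsum : ∑ j ∈ Finset.range n, d j = 0 := by
    rw [hrange (fun j => q j - p j), Finset.sum_sub_distrib]
    linarith
  have hσd : ∑ j ∈ Finset.range n, σ j * d j =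
      ∑ i, (Fl x (q i) - Fl x (p i)) := by
    rw [← hrange (fun i => Fl x (q i) - Fl x (p i))]
    refine Finset.sum_congr rfl fun i hi => ?_
    have hin : i < n := Finset.mem_range.mp hi
    simp only [hσdef, hd, dif_pos hin]
    exact (gslope_eq x _ _).symm
  rw [hdsum, mul_zero, hσd] at habel
  have hkey : ∑ i, Fl x (p i) ≤ ∑ i, Fl x (q i) := by
    rw [Finset.sum_sub_distrib] at habel
    linarith
  -- now convert to the product inequality
  have hx0 : (0:ℝ) < x := lt_trans one_pos hx
  have hp1 : ∀ i : Fin n, 0 < x ^ p i - 1 := fun i => by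
    have := one_lt_rpow' hx (hppos i); linarith
  have hq1 : ∀ i : Fin n, 0 < x ^ q i - 1 := fun i => by
    have := one_lt_rpow' hx (hqpos i); linarith
  have hL : 0 < (∏ j, q j) * ∏ j, (x ^ p j - 1) := by
    apply mul_pos <;> exact Finset.prod_pos fun i _ => by first | exact hqpos i | exact hp1 i
  have hR : 0 < (∏ j, p j) * ∏ j, (x ^ q j - 1) := by
    apply mul_pos <;> exact Finset.prod_pos fun i _ => by first | exact hppos i | exact hq1 i
  rw [← Real.log_le_log_iff hL hR, Real.log_mul (ne_of_gt (Finset.prod_pos fun i _ => hqpos i))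
      (ne_of_gt (Finset.prod_pos fun i _ => hp1 i)),
    Real.log_mul (ne_of_gt (Finset.prod_pos fun i _ => hppos i))
      (ne_of_gt (Finset.prod_pos fun i _ => hq1 i)),
    Real.log_prod (fun i _ => ne_of_gt (hqpos i)),
    Real.log_prod (fun i _ => ne_of_gt (hp1 i)),
    Real.log_prod (fun i _ => ne_of_gt (hppos i)),
    Real.log_prod (fun i _ => ne_of_gt (hq1 i))]
  have h1 : ∑ i, Fl x (p i) = ∑ i, Real.log (x ^ p i - 1) - ∑ i, Real.log (p i) := by
    rw [← Finset.sum_sub_distrib]; rfl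
  have h2 : ∑ i, Fl x (q i) = ∑ i, Real.log (x ^ q i - 1) - ∑ i, Real.log (q i) := by
    rw [← Finset.sum_sub_distrib]; rfl
  rw [h1, h2] at hkey
  linarith
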